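/- Let m be a positive integer, p a prime not dividing m, and x ∈ ZMod p with x ≠ 0. Then ∑_{n=1}^{p-1} T_n(x) · ((-m)⁻¹)^n = ((-x)⁻¹)^(m-1) · ∑_{k=0}^{m-1} ((m-1)!/k!) · (-x)^k in ZMod p, where T_n(x) denotes the n-th Touchard polynomial evaluated at x (reduced mod p) and (m-1)!/k! is the integer ∏_{s=k+1}^{m-1} s. -/
import Mathlib


open Polynomial

/-- The Touchard polynomials in `ℤ[X]`, determined by `touchard 0 = 1` and
`touchard (n+1) = X * ∑_{k=0}^{n} C(n,k) * touchard k`. -/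
noncomputable def touchard : ℕ → ℤ[X]
  | 0 => 1
  | n + 1 => X * ∑ k ∈ (Finset.range (n + 1)).attach, (n.choose k : ℤ[X]) * touchard k
decreasing_by exact Finset.mem_range.mp k.2

open Finset


/-- Stirling numbers of the second kind. -/
def St : ℕ → ℕ → ℕ
  | 0, 0 => 1
  | 0, _ + 1 => 0
  | _ + 1, 0 => 0
  | n + 1, k + 1 => (k + 1) * St n (k + 1) + St n k

lemma St_eq_zero : ∀ {n k : ℕ}, n < k → St n k = 0
  | 0, _ + 1, _ => rfl
  | n + 1, k + 1, h => by
    have h1 : n < k + 1 := by omega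
    have h2 : n < k := by omega
    simp [St, St_eq_zero h1, St_eq_zero h2]

lemma St_vertical (n k : ℕ) :
    St (n + 1) (k + 1) = ∑ j ∈ range (n + 1), n.choose j * St j k := by
  induction n generalizing k with
  | zero => simp [St]
  | succ n ih =>
    rw [Finset.sum_range_succ' (fun j => (n+1).choose j * St j k)]
    have h1 : ∀ j ∈ range (n + 1), (n+1).choose (j+1) * St (j+1) k
        = n.choose (j+1) * St (j+1) k + n.choose j * St (j+1) k := by
      intro j _; rw [Nat.choose_succ_succ]; ring
    rw [Finset.sum_congr rfl h1, Finset.sum_add_distrib]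
    have h2 : ∑ j ∈ range (n + 1), n.choose (j+1) * St (j+1) k
        + (n+1).choose 0 * St 0 k = St (n + 1) (k + 1) := by
      rw [ih k, Finset.sum_range_succ' (fun j => n.choose j * St j k)]
      have : ∑ j ∈ range (n+1), n.choose j * St j k
          = ∑ j ∈ range n, n.choose (j+1) * St (j+1) k + n.choose 0 * St 0 k := by
        rw [← Finset.sum_range_succ' (fun j => n.choose j * St j k)]
      rw [Finset.sum_range_succ (fun j => n.choose (j+1) * St (j+1) k)]
      simp [Nat.choose_succ_self]
    rcases k with _ | k
    · have h3 : ∀ j ∈ range (n + 1), n.choose j * St (j+1) 0 = 0 := by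
        intro j _; simp [St]
      rw [Finset.sum_congr rfl h3, Finset.sum_const_zero,
        show St (n+1+1) (0+1) = (0+1) * St (n+1) (0+1) + St (n+1) 0 from rfl,
        show St (n+1) 0 = 0 from rfl, ← h2]
      ring
    · have h3 : ∀ j ∈ range (n + 1), n.choose j * St (j+1) (k+1)
          = (k+1) * (n.choose j * St j (k+1)) + n.choose j * St j k := by
        intro j _; simp only [St]; ring
      rw [Finset.sum_congr rfl h3, Finset.sum_add_distrib, ← Finset.mul_sum, ← ih k, ← ih (k+1),
        show St (n+1+1) (k+1+1) = (k+1+1) * St (n+1) (k+1+1) + St (n+1) (k+1) from rfl, ← h2]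
      ring

lemma touchard_apply (n : ℕ) : touchard (n + 1)
    = X * ∑ j ∈ range (n + 1), (n.choose j : ℤ[X]) * touchard j := by
  rw [touchard]
  congr 1
  exact Finset.sum_attach _ (fun j => (n.choose j : ℤ[X]) * touchard j)

lemma touchard_eq (n : ℕ) :
    touchard n = ∑ k ∈ range (n + 1), (St n k : ℤ[X]) * X ^ k := by
  induction n using Nat.strong_induction_on with
  | _ n ih =>
    match n with
    | 0 => simp [touchard, St]
    | n + 1 =>
      rw [touchard_apply]
      have h1 : ∀ j ∈ range (n + 1), (n.choose j : ℤ[X]) * touchard j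
          = ∑ k ∈ range (n + 1), ((n.choose j * St j k : ℕ) : ℤ[X]) * X ^ k := by
        intro j hj
        rw [ih j (Finset.mem_range.mp hj), Finset.mul_sum]
        rw [← Finset.sum_subset (Finset.range_subset_range.mpr (Finset.mem_range.mp hj))]
        · apply Finset.sum_congr rfl; intro k _; push_cast; ring
        · intro k _ hk
          rw [St_eq_zero (by simpa using hk)]
          simp
      rw [Finset.sum_congr rfl h1, Finset.sum_comm]
      have h2 : ∀ k ∈ range (n + 1), ∑ j ∈ range (n+1), ((n.choose j * St j k : ℕ) : ℤ[X]) * X ^ k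
          = ((St (n+1) (k+1) : ℕ) : ℤ[X]) * X ^ k := by
        intro k _
        rw [← Finset.sum_mul, St_vertical]
        norm_cast
      rw [Finset.sum_congr rfl h2, Finset.mul_sum]
      rw [Finset.sum_range_succ' (fun k => ((St (n+1) k : ℕ) : ℤ[X]) * X ^ k)]
      simp only [St, Nat.cast_zero, zero_mul, add_zero, pow_zero, mul_one, zero_add]
      apply Finset.sum_congr rfl
      intro k _
      ring
lemma factorial_St (n k : ℕ) :
    (k.factorial : ℤ) * St n k
      = ∑ j ∈ Finset.range (k + 1), (-1) ^ j * k.choose j * ((k : ℤ) - j) ^ n := by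
  induction n generalizing k with
  | zero =>
    simp only [pow_zero, mul_one]
    rw [Int.alternating_sum_range_choose]
    rcases k with _ | k
    · simp [St]
    · simp [St_eq_zero (Nat.zero_lt_succ k)]
  | succ n ih =>
    rcases k with _ | k
    · simp [St]
    · have key : ∑ j ∈ Finset.range (k+2), (-1:ℤ)^j * (k+1).choose j * ((k+1:ℤ) - j)^(n+1)
          = (k+1) * (∑ j ∈ Finset.range (k+2), (-1:ℤ)^j * (k+1).choose j * ((k+1:ℤ) - j)^n)
            - ∑ j ∈ Finset.range (k+2), (-1:ℤ)^j * (j * (k+1).choose j) * ((k+1:ℤ) - j)^n := by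
        rw [Finset.mul_sum, ← Finset.sum_sub_distrib]
        apply Finset.sum_congr rfl; intro j _; ring
      have h2 : ∑ j ∈ Finset.range (k+2), (-1:ℤ)^j * (j * (k+1).choose j) * ((k+1:ℤ) - j)^n
          = -((k+1) * ∑ j ∈ Finset.range (k+1), (-1:ℤ)^j * k.choose j * ((k:ℤ) - j)^n) := by
        rw [Finset.sum_range_succ'
          (fun j => (-1:ℤ)^j * (j * (k+1).choose j) * ((k+1:ℤ) - j)^n)]
        simp only [Nat.cast_zero, zero_mul, mul_zero, zero_mul, add_zero]
        rw [← neg_mul, Finset.mul_sum]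
        apply Finset.sum_congr rfl
        intro i _
        have h' : (k+1) * k.choose i = (k+1).choose (i+1) * (i+1) := Nat.add_one_mul_choose_eq k i
        have h'' : (i+1) * ((k+1).choose (i+1)) = (k+1) * k.choose i := by rw [h']; ring
        have hc : ((i:ℤ)+1) * ((k+1).choose (i+1)) = ((k:ℤ)+1) * k.choose i := by
          exact_mod_cast h''
        push_cast
        linear_combination ((-1:ℤ))^(i+1) * ((k:ℤ) - (i:ℤ))^n * hc
      rw [show St (n+1) (k+1) = (k+1) * St n (k+1) + St n k from rfl]
      push_cast
      rw [key, h2]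
      have e1 : ((k+1).factorial : ℤ) * ((k+1) * St n (k+1) + St n k)
          = (k+1) * (((k+1).factorial : ℤ) * St n (k+1)) + (k+1) * ((k.factorial : ℤ) * St n k) := by
        rw [Nat.factorial_succ]; push_cast; ring
      push_cast at e1
      rw [e1, ih (k+1), ih k]
      push_cast
      ring
lemma geom_Icc {p : ℕ} [Fact p.Prime] (a : ZMod p) :
    ∑ n ∈ Finset.Icc 1 (p - 1), a ^ n = if a = 1 then -1 else 0 := by
  have hp : p.Prime := Fact.out
  have h0 : insert 0 (Finset.Icc 1 (p - 1)) = Finset.range p := by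
    ext n
    simp only [Finset.mem_insert, Finset.mem_Icc, Finset.mem_range]
    have := hp.two_le; omega
  have hnot : (0 : ℕ) ∉ Finset.Icc 1 (p - 1) := by simp
  have hs : ∑ n ∈ Finset.range p, a ^ n = a ^ 0 + ∑ n ∈ Finset.Icc 1 (p - 1), a ^ n := by
    rw [← h0, Finset.sum_insert hnot]
  rw [pow_zero] at hs
  rcases eq_or_ne a 1 with h | h
  · subst h
    rw [if_pos rfl]
    have h1 : ((p - 1 : ℕ) : ZMod p) = -1 := by
      rw [Nat.cast_sub hp.one_lt.le]
      simp
    simp only [one_pow, Finset.sum_const, nsmul_eq_mul, mul_one, Nat.card_Icc]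
    simpa using h1
  · rw [if_neg h]
    rw [geom_sum_eq h p, ZMod.pow_card, div_self (sub_ne_zero.mpr h)] at hs
    linear_combination -hs

lemma choose_p_sub_one {p : ℕ} [Fact p.Prime] {k : ℕ} (hk : k < p) :
    (((p - 1).choose k : ℕ) : ZMod p) = (-1) ^ k := by
  have hp : p.Prime := Fact.out
  induction k with
  | zero => simp
  | succ k ih =>
    have hk' : k < p := by omega
    have hpas : p.choose (k + 1) = (p - 1).choose k + (p - 1).choose (k + 1) := by
      have hp1 : p - 1 + 1 = p := by have := hp.pos; omega
      rw [← hp1]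
      exact Nat.choose_succ_succ (p - 1) k
    have hdvd : p ∣ p.choose (k + 1) := hp.dvd_choose_self (Nat.succ_ne_zero k) hk
    have h0 : ((p.choose (k + 1) : ℕ) : ZMod p) = 0 :=
      (ZMod.natCast_eq_zero_iff _ _).mpr hdvd
    rw [hpas] at h0
    push_cast at h0
    rw [ih hk'] at h0
    rw [pow_succ]
    linear_combination h0

lemma fac_ne_zero {p : ℕ} [Fact p.Prime] {k : ℕ} (hk : k < p) :
    ((k.factorial : ℕ) : ZMod p) ≠ 0 := by
  have hp : p.Prime := Fact.out
  rw [Ne, ZMod.natCast_eq_zero_iff]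
  rw [Nat.Prime.dvd_factorial hp]
  omega

lemma fac_mul_prod_Ioc {i r : ℕ} (h : i ≤ r) :
    i.factorial * ∏ t ∈ Finset.Ioc i r, t = r.factorial := by
  induction r with
  | zero =>
    have : i = 0 := by omega
    subst this; simp
  | succ r ih =>
    rcases Nat.lt_or_ge i (r + 1) with h' | h'
    · have hir : i ≤ r := by omega
      rw [Finset.prod_Ioc_succ_top hir, ← mul_assoc, ih hir, Nat.factorial_succ]
      ring
    · have : i = r + 1 := by omega
      subst this; simp
lemma wilson_var {p : ℕ} [Fact p.Prime] {r : ℕ} (h1 : 1 ≤ r) (h2 : r < p) :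
    (((p - r).factorial : ℕ) : ZMod p) * (((r - 1).factorial : ℕ) : ZMod p) * (-1) ^ (r - 1)
      = -1 := by
  have hp : p.Prime := Fact.out
  have hle : r - 1 ≤ p - 1 := by omega
  have hfac : (p-1).choose (r-1) * (r-1).factorial * ((p-1) - (r-1)).factorial
      = (p-1).factorial := Nat.choose_mul_factorial_mul_factorial hle
  have hsub : (p-1) - (r-1) = p - r := by omega
  rw [hsub] at hfac
  have hcast := congrArg (Nat.cast : ℕ → ZMod p) hfac
  push_cast at hcast
  rw [choose_p_sub_one (show r - 1 < p by omega)] at hcast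
  have hw : ((p-1).factorial : ZMod p) = -1 := ZMod.wilsons_lemma p
  rw [hw] at hcast
  linear_combination hcast
theorem touchard_sum_eval (m : ℕ) (hm : 0 < m) (p : ℕ) (hp : p.Prime) (hpm : ¬ p ∣ m)
    (x : ZMod p) (hx : x ≠ 0) :
    ∑ n ∈ Finset.Icc 1 (p - 1), (aeval x (touchard n)) * ((-(m : ZMod p))⁻¹) ^ n
      = ((-x)⁻¹) ^ (m - 1) *
          ∑ k ∈ Finset.range m,
            ((∏ s ∈ Finset.Icc (k + 1) (m - 1), s : ℕ) : ZMod p) * (-x) ^ k := by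
  haveI : Fact p.Prime := ⟨hp⟩
  haveI : NeZero p := ⟨hp.ne_zero⟩
  set m' := m % p with hm'def
  set j0 := p - m' with hj0def
  have hp2 := hp.two_le
  have hm'1 : 1 ≤ m' := by
    have : m % p ≠ 0 := fun h => hpm (Nat.dvd_iff_mod_eq_zero.mpr h)
    omega
  have hm'p : m' < p := Nat.mod_lt _ hp.pos
  have hm'm : m' ≤ m := Nat.mod_le m p
  have hj01 : 1 ≤ j0 := by omega
  have hj0p : j0 < p := by omega
  have hmm : (m' : ZMod p) = (m : ZMod p) := ZMod.natCast_mod m p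
  have hm0 : (m : ZMod p) ≠ 0 := by
    rw [Ne, ZMod.natCast_eq_zero_iff]; exact hpm
  set y : ZMod p := (-(m : ZMod p))⁻¹ with hydef
  have hymne : (-(m : ZMod p)) ≠ 0 := neg_ne_zero.mpr hm0
  have hyne : y ≠ 0 := inv_ne_zero hymne
  have hyinv : y⁻¹ = -(m : ZMod p) := by rw [hydef, inv_inv]
  have hj0cast : ((j0 : ℕ) : ZMod p) = -(m : ZMod p) := by
    have h0 : ((j0 + m' : ℕ) : ZMod p) = 0 := by
      rw [show j0 + m' = p by omega]; exact ZMod.natCast_self p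
    push_cast at h0
    rw [hmm] at h0
    linear_combination h0
  have hxne : (-x) ≠ 0 := neg_ne_zero.mpr hx
  set u : ZMod p := (-x)⁻¹ with hudef
  -- Step 1: evaluate touchard polynomials via Stirling numbers
  have step1 : ∑ n ∈ Finset.Icc 1 (p - 1), (aeval x (touchard n)) * y ^ n
      = ∑ n ∈ Finset.Icc 1 (p - 1), (∑ k ∈ Finset.range p, (St n k : ZMod p) * x ^ k) * y ^ n := by
    apply Finset.sum_congr rfl
    intro n hn
    congr 1
    rw [touchard_eq, map_sum]
    have h1 : ∀ k ∈ Finset.range (n + 1),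
        (aeval x) ((St n k : ℤ[X]) * X ^ k) = (St n k : ZMod p) * x ^ k := by
      intro k _
      rw [map_mul, map_pow, aeval_X, map_natCast]
    rw [Finset.sum_congr rfl h1]
    apply Finset.sum_subset
    · apply Finset.range_subset_range.mpr
      have := (Finset.mem_Icc.mp hn).2
      omega
    · intro k _ hk
      rw [St_eq_zero (by simpa using hk), Nat.cast_zero, zero_mul]
  -- Step 2: swap sums
  have step2 : ∑ n ∈ Finset.Icc 1 (p - 1), (∑ k ∈ Finset.range p, (St n k : ZMod p) * x ^ k) * y ^ n
      = ∑ k ∈ Finset.range p,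
          (∑ n ∈ Finset.Icc 1 (p - 1), (St n k : ZMod p) * y ^ n) * x ^ k := by
    have h1 : ∀ n ∈ Finset.Icc 1 (p - 1),
        (∑ k ∈ Finset.range p, (St n k : ZMod p) * x ^ k) * y ^ n
          = ∑ k ∈ Finset.range p, (St n k : ZMod p) * y ^ n * x ^ k := by
      intro n _
      rw [Finset.sum_mul]
      apply Finset.sum_congr rfl; intro k _; ring
    rw [Finset.sum_congr rfl h1, Finset.sum_comm]
    apply Finset.sum_congr rfl
    intro k _
    rw [Finset.sum_mul]
  -- Step 3: inner sums via geometric series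
  have inner : ∀ k ∈ Finset.range p,
      ∑ n ∈ Finset.Icc 1 (p - 1), (St n k : ZMod p) * y ^ n
        = ((k.factorial : ℕ) : ZMod p)⁻¹
            * (if j0 ≤ k then -((-1 : ZMod p) ^ (k - j0) * ((k.choose j0 : ℕ) : ZMod p)) else 0) := by
    intro k hk
    have hkp : k < p := Finset.mem_range.mp hk
    have hfne := fac_ne_zero (p := p) hkp
    have hK : ((k.factorial : ℕ) : ZMod p) * ∑ n ∈ Finset.Icc 1 (p - 1), (St n k : ZMod p) * y ^ n
        = (if j0 ≤ k then -((-1 : ZMod p) ^ (k - j0) * ((k.choose j0 : ℕ) : ZMod p)) else 0) := by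
      rw [Finset.mul_sum]
      have hterm : ∀ n ∈ Finset.Icc 1 (p - 1),
          ((k.factorial : ℕ) : ZMod p) * ((St n k : ZMod p) * y ^ n)
            = ∑ j ∈ Finset.range (k + 1),
                (-1 : ZMod p) ^ j * ((k.choose j : ℕ) : ZMod p) * (((k : ZMod p) - j) * y) ^ n := by
        intro n _
        have hZ := congrArg (Int.cast : ℤ → ZMod p) (factorial_St n k)
        push_cast at hZ
        rw [← mul_assoc, hZ, Finset.sum_mul]
        apply Finset.sum_congr rfl
        intro j _
        rw [mul_pow]
        ring
      rw [Finset.sum_congr rfl hterm, Finset.sum_comm]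
      have hgeom : ∀ j ∈ Finset.range (k + 1),
          ∑ n ∈ Finset.Icc 1 (p - 1),
              (-1 : ZMod p) ^ j * ((k.choose j : ℕ) : ZMod p) * (((k : ZMod p) - j) * y) ^ n
            = (-1 : ZMod p) ^ j * ((k.choose j : ℕ) : ZMod p)
                * (if k - j = j0 then (-1 : ZMod p) else 0) := by
        intro j hj
        have hjk : j ≤ k := by
          have := Finset.mem_range.mp hj; omega
        rw [← Finset.mul_sum, geom_Icc]
        congr 1
        have hcond : (((k : ZMod p) - j) * y = 1) ↔ (k - j = j0) := by
          constructor
          · intro h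
            have h2 : (k : ZMod p) - j = y⁻¹ := eq_inv_of_mul_eq_one_left h
            rw [hyinv, ← hj0cast] at h2
            have h3 : ((k - j : ℕ) : ZMod p) = ((j0 : ℕ) : ZMod p) := by
              push_cast [Nat.cast_sub hjk]
              exact h2
            have h4 := congrArg ZMod.val h3
            rwa [ZMod.val_cast_of_lt (show k - j < p by omega),
              ZMod.val_cast_of_lt hj0p] at h4
          · intro h
            have h2 : (k : ZMod p) - j = -(m : ZMod p) := by
              rw [← hj0cast, ← h]
              push_cast [Nat.cast_sub hjk]
              ring
            rw [h2, hydef, mul_inv_cancel₀ hymne]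
        simp only [hcond]
      rw [Finset.sum_congr rfl hgeom]
      rcases le_or_gt j0 k with hle | hlt
      · rw [if_pos hle]
        rw [Finset.sum_eq_single (k - j0)]
        · rw [if_pos (by omega), Nat.choose_symm hle]
          ring
        · intro j hj hne
          rw [if_neg (by have := Finset.mem_range.mp hj; omega), mul_zero]
        · intro h
          exact absurd (Finset.mem_range.mpr (by omega)) h
      · rw [if_neg (not_le.mpr hlt)]
        apply Finset.sum_eq_zero
        intro j hj
        rw [if_neg (by have := Finset.mem_range.mp hj; omega), mul_zero]
    have h5 : ((k.factorial : ℕ) : ZMod p)⁻¹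
        * (((k.factorial : ℕ) : ZMod p) * ∑ n ∈ Finset.Icc 1 (p - 1), (St n k : ZMod p) * y ^ n)
          = ∑ n ∈ Finset.Icc 1 (p - 1), (St n k : ZMod p) * y ^ n := by
      rw [← mul_assoc, inv_mul_cancel₀ hfne, one_mul]
    rw [← h5, hK]
  -- Step 4: collapse the k-sum to i ∈ range m'
  have step4 : ∑ k ∈ Finset.range p,
      (∑ n ∈ Finset.Icc 1 (p - 1), (St n k : ZMod p) * y ^ n) * x ^ k
        = ∑ i ∈ Finset.range m',
            (((j0 + i).factorial : ℕ) : ZMod p)⁻¹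
              * -((-1 : ZMod p) ^ i * (((j0 + i).choose j0 : ℕ) : ZMod p)) * x ^ (j0 + i) := by
    rw [Finset.sum_congr rfl (fun k hk => by rw [inner k hk])]
    rw [show Finset.range p = Finset.range (j0 + m') by rw [show j0 + m' = p by omega],
      Finset.sum_range_add]
    have hz : ∀ k ∈ Finset.range j0,
        ((k.factorial : ℕ) : ZMod p)⁻¹
            * (if j0 ≤ k then -((-1 : ZMod p) ^ (k - j0) * ((k.choose j0 : ℕ) : ZMod p)) else 0)
            * x ^ k = 0 := by
      intro k hk
      rw [if_neg (by have := Finset.mem_range.mp hk; omega), mul_zero, zero_mul]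
    rw [Finset.sum_congr rfl hz, Finset.sum_const_zero, zero_add]
    apply Finset.sum_congr rfl
    intro i _
    rw [if_pos (by omega), show j0 + i - j0 = i by omega]
  rw [step1, step2, step4]
  -- RHS reduction
  have rhs1 : u ^ (m - 1) * ∑ k ∈ Finset.range m,
        ((∏ s ∈ Finset.Icc (k + 1) (m - 1), s : ℕ) : ZMod p) * (-x) ^ k
      = ∑ j ∈ Finset.range m,
          ((∏ s ∈ Finset.Icc (m - j) (m - 1), s : ℕ) : ZMod p) * u ^ j := by
    rw [Finset.mul_sum, ← Finset.sum_range_reflect]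
    apply Finset.sum_congr rfl
    intro j hj
    have hjm : j < m := Finset.mem_range.mp hj
    have hidx : m - 1 - j + 1 = m - j := by omega
    rw [hidx]
    have hpow : u ^ (m - 1) * (-x) ^ (m - 1 - j) = u ^ j := by
      have e : m - 1 - j + j = m - 1 := by omega
      calc u ^ (m - 1) * (-x) ^ (m - 1 - j)
          = u ^ (m - 1 - j + j) * (-x) ^ (m - 1 - j) := by rw [e]
        _ = (u * -x) ^ (m - 1 - j) * u ^ j := by rw [pow_add, mul_pow]; ring
        _ = u ^ j := by rw [hudef, inv_mul_cancel₀ hxne, one_pow, one_mul]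
    rw [← hpow]
    ring
  rw [rhs1]
  have rhs3 : ∑ j ∈ Finset.range m,
        ((∏ s ∈ Finset.Icc (m - j) (m - 1), s : ℕ) : ZMod p) * u ^ j
      = ∑ j ∈ Finset.range m',
          ((∏ s ∈ Finset.Icc (m - j) (m - 1), s : ℕ) : ZMod p) * u ^ j := by
    symm
    apply Finset.sum_subset (Finset.range_subset_range.mpr hm'm)
    intro j hjm hjm'
    have hj1 : m' ≤ j := by
      have := Finset.mem_range.mp hjm
      simp only [Finset.mem_range, not_lt] at hjm'
      omega
    have hjm2 : j < m := Finset.mem_range.mp hjm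
    have h1 : m - m' ∈ Finset.Icc (m - j) (m - 1) := by
      rw [Finset.mem_Icc]; omega
    rw [Nat.cast_prod, Finset.prod_eq_zero h1, zero_mul]
    rw [Nat.cast_sub hm'm, hmm, sub_self]
  rw [rhs3, ← Finset.sum_range_reflect (fun j =>
    ((∏ s ∈ Finset.Icc (m - j) (m - 1), s : ℕ) : ZMod p) * u ^ j) m']
  -- termwise comparison
  apply Finset.sum_congr rfl
  intro i hi
  have him : i < m' := Finset.mem_range.mp hi
  -- simplify the product index
  have hQ : ((∏ s ∈ Finset.Icc (m - (m' - 1 - i)) (m - 1), s : ℕ) : ZMod p)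
      = ((∏ t ∈ Finset.Ioc i (m' - 1), t : ℕ) : ZMod p) := by
    rw [Nat.cast_prod, Nat.cast_prod]
    have hmap := Finset.map_add_left_Icc (i + 1) (m' - 1) (m - m')
    have hidx1 : m - m' + (i + 1) = m - (m' - 1 - i) := by omega
    have hidx2 : m - m' + (m' - 1) = m - 1 := by omega
    rw [hidx1, hidx2] at hmap
    rw [← hmap, Finset.prod_map, show Finset.Ioc i (m' - 1) = Finset.Icc (i + 1) (m' - 1) from
      (Finset.Icc_add_one_left_eq_Ioc _ _).symm]
    apply Finset.prod_congr rfl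
    intro t ht
    show ((m - m' + t : ℕ) : ZMod p) = (t : ZMod p)
    push_cast [Nat.cast_sub hm'm]
    rw [hmm]
    ring
  rw [hQ]
  -- now the arithmetic identity
  have hj0i : j0 + i < p := by omega
  have hA : (((j0 + i).factorial : ℕ) : ZMod p) ≠ 0 := fac_ne_zero hj0i
  have hBi : ((i.factorial : ℕ) : ZMod p) ≠ 0 := fac_ne_zero (by omega)
  have hB : ((j0.factorial : ℕ) : ZMod p) ≠ 0 := fac_ne_zero hj0p
  have hC : (((j0 + i).choose j0 : ℕ) : ZMod p) * ((j0.factorial : ℕ) : ZMod p)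
        * ((i.factorial : ℕ) : ZMod p) = (((j0 + i).factorial : ℕ) : ZMod p) := by
    have h0 := Nat.choose_mul_factorial_mul_factorial (Nat.le_add_right j0 i)
    rw [Nat.add_sub_cancel_left] at h0
    exact_mod_cast congrArg (Nat.cast : ℕ → ZMod p) h0
  have hD : ((i.factorial : ℕ) : ZMod p) * ((∏ t ∈ Finset.Ioc i (m' - 1), t : ℕ) : ZMod p)
      = (((m' - 1).factorial : ℕ) : ZMod p) := by
    have := fac_mul_prod_Ioc (show i ≤ m' - 1 by omega)
    exact_mod_cast congrArg (Nat.cast : ℕ → ZMod p) this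
  have hX : x ^ (j0 + i) * x ^ (m' - 1 - i) = 1 := by
    rw [← pow_add, show j0 + i + (m' - 1 - i) = p - 1 by omega]
    exact ZMod.pow_card_sub_one_eq_one hx
  have hw' : ((j0.factorial : ℕ) : ZMod p) * (((m' - 1).factorial : ℕ) : ZMod p)
      * (-1 : ZMod p) ^ (m' - 1) = -1 := by
    have hw := wilson_var (p := p) hm'1 hm'p
    rw [← hj0def] at hw
    exact hw
  have hs6 : (-1 : ZMod p) ^ i * (-1 : ZMod p) ^ (m' - 1 - i) = (-1 : ZMod p) ^ (m' - 1) := by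
    rw [← pow_add]; congr 1; omega
  have hsq : (-1 : ZMod p) ^ (m' - 1) * (-1 : ZMod p) ^ (m' - 1) = 1 := by
    rw [← pow_add, show m' - 1 + (m' - 1) = 2 * (m' - 1) by ring, pow_mul]
    norm_num
  have hneg : (-x) ^ (m' - 1 - i) = (-1 : ZMod p) ^ (m' - 1 - i) * x ^ (m' - 1 - i) := by
    rw [neg_pow]
  rw [hudef, inv_pow]
  rw [show (((j0 + i).factorial : ℕ) : ZMod p)⁻¹
        * -((-1 : ZMod p) ^ i * (((j0 + i).choose j0 : ℕ) : ZMod p)) * x ^ (j0 + i)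
      = (-((-1 : ZMod p) ^ i * (((j0 + i).choose j0 : ℕ) : ZMod p)) * x ^ (j0 + i))
          / (((j0 + i).factorial : ℕ) : ZMod p) by ring,
    show ((∏ t ∈ Finset.Ioc i (m' - 1), t : ℕ) : ZMod p) * ((-x) ^ (m' - 1 - i))⁻¹
      = ((∏ t ∈ Finset.Ioc i (m' - 1), t : ℕ) : ZMod p) / ((-x) ^ (m' - 1 - i)) from
        (div_eq_mul_inv _ _).symm,
    div_eq_div_iff hA (pow_ne_zero (m' - 1 - i) hxne), hneg]
  linear_combination
    (-((-1 : ZMod p) ^ i * (-1 : ZMod p) ^ (m' - 1 - i)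
        * (((j0 + i).choose j0 : ℕ) : ZMod p))) * hX
    + (-(((j0 + i).choose j0 : ℕ) : ZMod p)) * hs6
    + ((∏ t ∈ Finset.Ioc i (m' - 1), t : ℕ) : ZMod p) * hC
    + (-((((j0 + i).choose j0 : ℕ) : ZMod p) * ((j0.factorial : ℕ) : ZMod p))) * hD
    + (-((((j0 + i).choose j0 : ℕ) : ZMod p) * (-1 : ZMod p) ^ (m' - 1))) * hw'
    + ((((j0 + i).choose j0 : ℕ) : ZMod p) * ((j0.factorial : ℕ) : ZMod p)
        * (((m' - 1).factorial : ℕ) : ZMod p)) * hsq
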